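/- Let 𝓑 be a directed family with U ∈ 𝓑 and X ⊆ U constructible. If 𝓢 and 𝓣 are finite sets of balls with Ch(𝓢) = Ch(𝓣) = X and both (𝓢,⊆) and (𝓣,⊆) are ⊴-minimal among all finite sets of balls representing X, then 𝓢 = 𝓣. -/

import Mathlib

variable {U : Type*}

theorem Set.Finite.exists_maximal_wrt {α β : Type*} [PartialOrder β] (f : α → β) (s : Set α)
    (h : s.Finite) (hs : s.Nonempty) : ∃ a ∈ s, ∀ a' ∈ s, f a ≤ f a' → f a = f a' := by
  obtain ⟨a, ha, hmax⟩ := Set.Finite.exists_maximalFor f s h hs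
  exact ⟨a, ha, fun a' ha' hle => le_antisymm hle (hmax ha' hle)⟩

/-- A directed family: nonempty sets, any two nested or disjoint. -/
def DirFam (𝓑 : Set (Set U)) : Prop :=
  (∀ B ∈ 𝓑, B.Nonempty) ∧
    ∀ B₀ ∈ 𝓑, ∀ B₁ ∈ 𝓑, B₀ ⊆ B₁ ∨ B₁ ⊆ B₀ ∨ B₀ ∩ B₁ = ∅

/-- Constructible sets: finite boolean combinations of balls. -/
inductive Constr (𝓑 : Set (Set U)) : Set U → Prop
  | ball {B : Set U} : B ∈ 𝓑 → Constr 𝓑 B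
  | compl {X : Set U} : Constr 𝓑 X → Constr 𝓑 Xᶜ
  | union {X Y : Set U} : Constr 𝓑 X → Constr 𝓑 Y → Constr 𝓑 (X ∪ Y)

/-- Levels of a (finite) subset of a partial order: Lev 0 is the set of maximal
elements, and Lev (n+1) is Lev n of the set with its maximal elements removed. -/
def Lev {α : Type*} [PartialOrder α] : ℕ → Set α → Set α
  | 0, S => {a | a ∈ S ∧ ∀ b ∈ S, a ≤ b → a = b}
  | n + 1, S => Lev n (S \ {a | a ∈ S ∧ ∀ b ∈ S, a ≤ b → a = b})

/-- The swiss cheese operator: the union, over balls B on even levels of 𝓢, of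
B minus the union of its immediate predecessors (the next-level balls inside B). -/
def Ch (𝓢 : Set (Set U)) : Set U :=
  ⋃ n : ℕ, ⋃ B ∈ Lev (2 * n) 𝓢, B \ ⋃₀ {C | C ∈ Lev (2 * n + 1) 𝓢 ∧ C ⊆ B}

/-- A finite forest: the elements above any given element form a chain. -/
def FinForest {α : Type*} [PartialOrder α] (S : Set α) : Prop :=
  ∀ a ∈ S, IsChain (· ≤ ·) {b | b ∈ S ∧ a ≤ b}

/-- The quasi-order ⊴ on finite forests: first by cardinality, then by top-heaviness
of the level sizes. -/
def ForestQO {α β : Type*} [PartialOrder α] [PartialOrder β] (S : Set α) (T : Set β) :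
    Prop :=
  S.ncard < T.ncard ∨
    (S.ncard = T.ncard ∧
      ((∀ n, (Lev n S).ncard = (Lev n T).ncard) ∨
        ∃ n, (∀ i < n, (Lev i S).ncard = (Lev i T).ncard) ∧
          (Lev n T).ncard < (Lev n S).ncard))

noncomputable def cnt (S : Set (Set U)) (x : U) : ℕ := {B | B ∈ S ∧ x ∈ B}.ncard
def abv (S : Set (Set U)) (E : Set U) : Set (Set U) := {D | D ∈ S ∧ E ⊂ D}
def blw (S : Set (Set U)) (E : Set U) : Set (Set U) := {B | B ∈ S ∧ B ⊆ E}
def outE (S : Set (Set U)) (E : Set U) : Set (Set U) := {B | B ∈ S ∧ ¬ B ⊆ E}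
noncomputable def pf (S : Set (Set U)) (F : Set U) (n : ℕ) : ℕ :=
  ({B | B ∈ blw S F ∧ (abv S B).ncard = n}).ncard

theorem lev_depth : ∀ (n : ℕ) (S : Set (Set U)), S.Finite →
    (∀ B ∈ S, IsChain (· ⊆ ·) {D | D ∈ S ∧ B ⊆ D}) →
    Lev n S = {B | B ∈ S ∧ ({D | D ∈ S ∧ B ⊂ D}).ncard = n} := by
  intro n
  induction n with
  | zero =>
    intro S hf hch
    ext B
    simp only [Lev, Set.mem_setOf_eq]
    constructor
    · rintro ⟨hB, hmax⟩
      refine ⟨hB, ?_⟩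
      rw [Set.ncard_eq_zero (hf.subset (fun D hD => hD.1))]
      ext D; simp only [Set.mem_setOf_eq, Set.mem_empty_iff_false, iff_false]
      rintro ⟨hD, hlt⟩
      exact hlt.ne (hmax D hD hlt.le)
    · rintro ⟨hB, hn⟩
      refine ⟨hB, fun b hb hle => ?_⟩
      by_contra hne
      have : b ∈ ({D | D ∈ S ∧ B ⊂ D} : Set (Set U)) := ⟨hb, lt_of_le_of_ne hle hne⟩
      rw [Set.ncard_eq_zero (hf.subset (fun D hD => hD.1))] at hn
      simp [hn] at this
  | succ n ih =>
    intro S hf hch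
    set Mx : Set (Set U) := {a | a ∈ S ∧ ∀ b ∈ S, a ≤ b → a = b} with hMx
    have hS' : S \ Mx ⊆ S := Set.diff_subset
    have hf' : (S \ Mx).Finite := hf.subset hS'
    have hch' : ∀ B ∈ S \ Mx, IsChain (· ⊆ ·) {D | D ∈ S \ Mx ∧ B ⊆ D} := by
      intro B hB
      have hsub1 : {D | D ∈ S \ Mx ∧ B ⊆ D} ⊆ {D | D ∈ S ∧ B ⊆ D} :=
        fun D hD => ⟨hS' hD.1, hD.2⟩
      exact (hch B (hS' hB)).mono hsub1
    -- key facts about tops of chains above B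
    have key : ∀ B ∈ S, ({D | D ∈ S ∧ B ⊂ D}).Nonempty →
        ∃ M, M ∈ Mx ∧ B ⊂ M ∧ {D | (D ∈ S ∧ D ∉ Mx) ∧ B ⊂ D} = {D | D ∈ S ∧ B ⊂ D} \ {M} := by
      intro B hB hne
      have hTf : ({D | D ∈ S ∧ B ⊂ D}).Finite := hf.subset (fun D hD => hD.1)
      have hsub2 : {D | D ∈ S ∧ B ⊂ D} ⊆ {D | D ∈ S ∧ B ⊆ D} :=
        fun D hD => ⟨hD.1, hD.2.le⟩
      have hchT : IsChain (· ⊆ ·) {D | D ∈ S ∧ B ⊂ D} := (hch B hB).mono hsub2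
      obtain ⟨M, hM, hmax⟩ := hTf.exists_maximal_wrt id _ hne
      have hMtop : ∀ D ∈ ({D | D ∈ S ∧ B ⊂ D} : Set (Set U)), D ⊆ M := by
        intro D hD
        rcases hchT.total hM hD with h | h
        · exact (hmax D hD h).ge
        · exact h
      refine ⟨M, ⟨hM.1, ?_⟩, hM.2, ?_⟩
      · intro b hb hle
        by_contra hne'
        exact (lt_of_le_of_ne hle hne').2 (hMtop b ⟨hb, hM.2.trans_le hle⟩)
      · ext D
        simp only [Set.mem_setOf_eq, Set.mem_diff, Set.mem_singleton_iff]
        constructor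
        · rintro ⟨⟨hD, hDM⟩, hlt⟩
          refine ⟨⟨hD, hlt⟩, ?_⟩
          rintro rfl; exact hDM ⟨hM.1, fun b hb hle => by
            by_contra hne'
            exact (lt_of_le_of_ne hle hne').2 (hMtop b ⟨hb, hM.2.trans_le hle⟩)⟩
        · rintro ⟨⟨hD, hlt⟩, hDM⟩
          refine ⟨⟨hD, fun hDmx => hDM ?_⟩, hlt⟩
          exact (hDmx.2 M hM.1 (hMtop D ⟨hD, hlt⟩)).symm ▸ rfl
    have : Lev (n+1) S = Lev n (S \ Mx) := rfl
    rw [this, ih _ hf' hch']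
    ext B
    simp only [Set.mem_setOf_eq, Set.mem_diff]
    constructor
    · rintro ⟨⟨hB, hBmx⟩, hn⟩
      refine ⟨hB, ?_⟩
      have hne : ({D | D ∈ S ∧ B ⊂ D}).Nonempty := by
        rcases Set.eq_empty_or_nonempty {D | D ∈ S ∧ B ⊂ D} with hemp | hne
        · exfalso
          apply hBmx
          refine ⟨hB, fun b hb hle => ?_⟩
          by_contra hne'
          have hbmem : b ∈ {D | D ∈ S ∧ B ⊂ D} := ⟨hb, lt_of_le_of_ne hle hne'⟩
          rw [hemp] at hbmem
          exact hbmem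
        · exact hne
      obtain ⟨M, hMmx, hBM, heq⟩ := key B hB hne
      rw [heq] at hn
      have hMmem : M ∈ ({D | D ∈ S ∧ B ⊂ D} : Set (Set U)) := ⟨hMmx.1, hBM⟩
      have := Set.ncard_diff_singleton_add_one hMmem (hf.subset (fun D hD => hD.1))
      omega
    · rintro ⟨hB, hn⟩
      have hne : ({D | D ∈ S ∧ B ⊂ D}).Nonempty := by
        rw [Set.nonempty_iff_ne_empty]
        intro hemp
        rw [hemp] at hn; simp at hn
      obtain ⟨M, hMmx, hBM, heq⟩ := key B hB hne
      have hBmx : B ∉ Mx := fun hBmx => hBM.ne (hBmx.2 M hMmx.1 hBM.le)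
      refine ⟨⟨hB, hBmx⟩, ?_⟩
      rw [heq]
      have hMmem : M ∈ ({D | D ∈ S ∧ B ⊂ D} : Set (Set U)) := ⟨hMmx.1, hBM⟩
      have := Set.ncard_diff_singleton_add_one hMmem (hf.subset (fun D hD => hD.1))
      omega


/-- two balls sharing a point are comparable -/
lemma cmp_of_mem {𝓑 : Set (Set U)} (h : DirFam 𝓑) {A B : Set U} (hA : A ∈ 𝓑) (hB : B ∈ 𝓑)
    {x : U} (hxA : x ∈ A) (hxB : x ∈ B) : A ⊆ B ∨ B ⊆ A := by
  rcases h.2 A hA B hB with h' | h' | h'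
  · exact Or.inl h'
  · exact Or.inr h'
  · exact absurd (Set.mem_inter hxA hxB) (by rw [h']; exact id)

/-- two balls with a common nonempty subset are comparable -/
lemma cmp_of_sub {𝓑 : Set (Set U)} (h : DirFam 𝓑) {A B C : Set U} (hA : A ∈ 𝓑) (hB : B ∈ 𝓑)
    (hC : C ∈ 𝓑) (hCA : C ⊆ A) (hCB : C ⊆ B) : A ⊆ B ∨ B ⊆ A := by
  obtain ⟨x, hx⟩ := h.1 C hC
  exact cmp_of_mem h hA hB (hCA hx) (hCB hx)

lemma forest_of_sub {𝓑 : Set (Set U)} (h : DirFam 𝓑) {S : Set (Set U)} (hS : S ⊆ 𝓑) :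
    ∀ B ∈ S, IsChain (· ⊆ ·) {D | D ∈ S ∧ B ⊆ D} := by
  intro B hB D₁ hD₁ D₂ hD₂ hne
  rcases cmp_of_sub h (hS hD₁.1) (hS hD₂.1) (hS hB) hD₁.2 hD₂.2 with h' | h'
  · exact Or.inl h'
  · exact Or.inr h'

/-- position-k element of a finite chain -/
lemma chain_pos : ∀ (k : ℕ) (T : Set (Set U)), T.Finite → IsChain (· ⊆ ·) T → k < T.ncard →
    ∃ B ∈ T, ({D | D ∈ T ∧ B ⊂ D}).ncard = k := by
  intro k
  induction k with
  | zero =>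
    intro T hf hch hk
    obtain ⟨M, hM, hmax⟩ := hf.exists_maximal_wrt id T (Set.nonempty_of_ncard_ne_zero (by omega))
    refine ⟨M, hM, ?_⟩
    rw [Set.ncard_eq_zero (hf.subset (fun D hD => hD.1))]
    ext D
    simp only [Set.mem_setOf_eq, Set.mem_empty_iff_false, iff_false]
    rintro ⟨hD, hlt⟩
    rcases hch.total hM hD with h' | h'
    · exact hlt.ne (hmax D hD h')
    · exact hlt.2 h'
  | succ k ih =>
    intro T hf hch hk
    obtain ⟨B, hB, hcard⟩ := ih T hf hch (by omega)
    have habf : ({D | D ∈ T ∧ B ⊂ D}).Finite := hf.subset (fun D hD => hD.1)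
    have hbelow : ({D | D ∈ T ∧ D ⊂ B}).Nonempty := by
      rcases Set.eq_empty_or_nonempty {D | D ∈ T ∧ D ⊂ B} with hemp | hne
      · exfalso
        have hsub : T ⊆ insert B {D | D ∈ T ∧ B ⊂ D} := by
          intro D hD
          rcases eq_or_ne D B with rfl | hne'
          · exact Set.mem_insert _ _
          · rcases hch.total hD hB with h' | h'
            · exfalso
              have : D ∈ ({D | D ∈ T ∧ D ⊂ B} : Set (Set U)) := ⟨hD, lt_of_le_of_ne h' hne'⟩
              rw [hemp] at this; exact this
            · exact Set.mem_insert_of_mem _ ⟨hD, lt_of_le_of_ne h' (Ne.symm hne')⟩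
        have := Set.ncard_le_ncard hsub (habf.insert B)
        have := Set.ncard_insert_le B {D | D ∈ T ∧ B ⊂ D}
        omega
      · exact hne
    have hbf : ({D | D ∈ T ∧ D ⊂ B}).Finite := hf.subset (fun D hD => hD.1)
    have hchb : IsChain (· ⊆ ·) {D | D ∈ T ∧ D ⊂ B} := hch.mono (fun D hD => hD.1)
    obtain ⟨M, hM, hmax⟩ := hbf.exists_maximal_wrt id _ hbelow
    refine ⟨M, hM.1, ?_⟩
    have heq : {D | D ∈ T ∧ M ⊂ D} = insert B {D | D ∈ T ∧ B ⊂ D} := by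
      ext D
      simp only [Set.mem_setOf_eq, Set.mem_insert_iff]
      constructor
      · rintro ⟨hD, hlt⟩
        rcases eq_or_ne D B with rfl | hne'
        · exact Or.inl rfl
        · rcases hch.total hD hB with h' | h'
          · exfalso
            have hDb : D ∈ ({D | D ∈ T ∧ D ⊂ B} : Set (Set U)) := ⟨hD, lt_of_le_of_ne h' hne'⟩
            rcases hchb.total hM hDb with h'' | h''
            · exact hlt.ne (hmax D hDb h'')
            · exact hlt.2 h''
          · exact Or.inr ⟨hD, lt_of_le_of_ne h' (Ne.symm hne')⟩
      · rintro (rfl | ⟨hD, hlt⟩)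
        · exact ⟨hB, hM.2⟩
        · exact ⟨hD, hM.2.trans hlt⟩
    rw [heq, Set.ncard_insert_of_notMem (fun hBmem => hBmem.2.ne rfl) habf]
    omega

theorem mem_Ch_iff_odd {𝓑 : Set (Set U)} (h : DirFam 𝓑) {S : Set (Set U)} (hS : S ⊆ 𝓑)
    (hf : S.Finite) (x : U) : x ∈ Ch S ↔ Odd (cnt S x) := by
  show x ∈ Ch S ↔ Odd ({B | B ∈ S ∧ x ∈ B}.ncard)
  have hlev := fun n => lev_depth n S hf (forest_of_sub h hS)
  have hSxf : ({B | B ∈ S ∧ x ∈ B}).Finite := hf.subset (fun D hD => hD.1)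
  have hSxch : IsChain (· ⊆ ·) {B | B ∈ S ∧ x ∈ B} := by
    intro D₁ hD₁ D₂ hD₂ hne
    rcases cmp_of_mem h (hS hD₁.1) (hS hD₂.1) hD₁.2 hD₂.2 with h' | h'
    · exact Or.inl h'
    · exact Or.inr h'
  constructor
  · intro hx
    simp only [Ch, Set.mem_iUnion, Set.mem_diff] at hx
    obtain ⟨n, B, hBlev, hxB, hhole⟩ := hx
    rw [hlev] at hBlev
    obtain ⟨hBS, hBcard⟩ := hBlev
    -- no element of Sx strictly below B
    have hW : {D | D ∈ S ∧ x ∈ D ∧ D ⊂ B} = ∅ := by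
      rcases Set.eq_empty_or_nonempty {D | D ∈ S ∧ x ∈ D ∧ D ⊂ B} with hemp | hne
      · exact hemp
      exfalso
      obtain ⟨C, hC, hmax⟩ := (hf.subset (fun D hD => hD.1)).exists_maximal_wrt id
        {D | D ∈ S ∧ x ∈ D ∧ D ⊂ B} hne
      have hchW : IsChain (· ⊆ ·) {D | D ∈ S ∧ x ∈ D ∧ D ⊂ B} := by
        intro D₁ hD₁ D₂ hD₂ hne'
        rcases cmp_of_mem h (hS hD₁.1) (hS hD₂.1) hD₁.2.1 hD₂.2.1 with h' | h'
        · exact Or.inl h'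
        · exact Or.inr h'
      have hCeq : {D | D ∈ S ∧ C ⊂ D} = insert B {D | D ∈ S ∧ B ⊂ D} := by
        ext D
        simp only [Set.mem_setOf_eq, Set.mem_insert_iff]
        constructor
        · rintro ⟨hD, hlt⟩
          have hxD : x ∈ D := hlt.le hC.2.1
          rcases eq_or_ne D B with rfl | hne'
          · exact Or.inl rfl
          · rcases cmp_of_mem h (hS hD) (hS hBS) hxD hxB with h' | h'
            · exfalso
              have hDW : D ∈ ({D | D ∈ S ∧ x ∈ D ∧ D ⊂ B} : Set (Set U)) :=
                ⟨hD, hxD, lt_of_le_of_ne h' hne'⟩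
              rcases hchW.total hC hDW with h'' | h''
              · exact hlt.ne (hmax D hDW h'')
              · exact hlt.2 h''
            · exact Or.inr ⟨hD, lt_of_le_of_ne h' (Ne.symm hne')⟩
        · rintro (rfl | ⟨hD, hlt⟩)
          · exact ⟨hBS, hC.2.2⟩
          · exact ⟨hD, hC.2.2.trans hlt⟩
      apply hhole
      refine ⟨C, ⟨?_, hC.2.2.le⟩, hC.2.1⟩
      rw [hlev]
      refine ⟨hC.1, ?_⟩
      rw [hCeq, Set.ncard_insert_of_notMem (fun hBmem => hBmem.2.ne rfl)
        (hf.subset (fun D hD => hD.1)), hBcard]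
    -- Sx = above B ∪ {B}
    have hSx : {B' | B' ∈ S ∧ x ∈ B'} = insert B {D | D ∈ S ∧ B ⊂ D} := by
      ext D
      simp only [Set.mem_setOf_eq, Set.mem_insert_iff]
      constructor
      · rintro ⟨hD, hxD⟩
        rcases eq_or_ne D B with rfl | hne'
        · exact Or.inl rfl
        · rcases cmp_of_mem h (hS hD) (hS hBS) hxD hxB with h' | h'
          · exfalso
            have : D ∈ ({D | D ∈ S ∧ x ∈ D ∧ D ⊂ B} : Set (Set U)) :=
              ⟨hD, hxD, lt_of_le_of_ne h' hne'⟩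
            rw [hW] at this; exact this
          · exact Or.inr ⟨hD, lt_of_le_of_ne h' (Ne.symm hne')⟩
      · rintro (rfl | ⟨hD, hlt⟩)
        · exact ⟨hBS, hxB⟩
        · exact ⟨hD, hlt.le hxB⟩
    rw [hSx, Set.ncard_insert_of_notMem (fun hBmem => hBmem.2.ne rfl)
      (hf.subset (fun D hD => hD.1)), hBcard]
    exact ⟨n, by ring⟩
  · rintro ⟨n, hn⟩
    obtain ⟨B, hB, hBcard⟩ := chain_pos (2 * n) _ hSxf hSxch (by omega)
    have habove : {D | D ∈ S ∧ B ⊂ D} = {D | D ∈ {B' | B' ∈ S ∧ x ∈ B'} ∧ B ⊂ D} := by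
      ext D
      simp only [Set.mem_setOf_eq]
      exact ⟨fun ⟨hD, hlt⟩ => ⟨⟨hD, hlt.le hB.2⟩, hlt⟩, fun ⟨hD, hlt⟩ => ⟨hD.1, hlt⟩⟩
    simp only [Ch, Set.mem_iUnion, Set.mem_diff]
    refine ⟨n, B, ?_, hB.2, ?_⟩
    · rw [hlev]
      exact ⟨hB.1, by rw [habove]; exact hBcard⟩
    · rintro ⟨C, ⟨hClev, hCB⟩, hxC⟩
      rw [hlev] at hClev
      obtain ⟨hCS, hCcard⟩ := hClev
      have hsub : {D | D ∈ S ∧ C ⊂ D} ⊆ {B' | B' ∈ S ∧ x ∈ B'} \ {C} := by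
        rintro D ⟨hD, hlt⟩
        exact ⟨⟨hD, hlt.le hxC⟩, fun hDC => hlt.ne (by simpa using hDC.symm)⟩
      have h1 := Set.ncard_le_ncard hsub (hSxf.diff)
      have h2 : ({B' | B' ∈ S ∧ x ∈ B'} \ {C} : Set (Set U)).ncard + 1
          = ({B' | B' ∈ S ∧ x ∈ B'}).ncard := by
        have : ({B' | B' ∈ S ∧ x ∈ B'} \ {C}) = {B' | B' ∈ S ∧ x ∈ B'} \ {C} := rfl
        exact Set.ncard_diff_singleton_add_one ⟨hCS, hxC⟩ hSxf
      omega


lemma cnt_union {A B : Set (Set U)} (hf : A.Finite) (hfB : B.Finite)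
    (hd : ∀ D, D ∈ A → D ∈ B → False) (x : U) : cnt (A ∪ B) x = cnt A x + cnt B x := by
  unfold cnt
  have heq : {C | C ∈ A ∪ B ∧ x ∈ C} = {C | C ∈ A ∧ x ∈ C} ∪ {C | C ∈ B ∧ x ∈ C} := by
    ext C
    simp only [Set.mem_setOf_eq, Set.mem_union]
    tauto
  rw [heq, Set.ncard_union_eq (Set.disjoint_left.mpr (fun {C} hC hC' => hd C hC.1 hC'.1))
    (hf.subset (fun D hD => hD.1)) (hfB.subset (fun D hD => hD.1))]

/-- split count at a ball E for x ∈ E -/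
lemma cnt_split {𝓑 : Set (Set U)} (h : DirFam 𝓑) {S : Set (Set U)} (hS : S ⊆ 𝓑)
    (hf : S.Finite) {E : Set U} (hE : E ∈ 𝓑) {x : U} (hx : x ∈ E) :
    cnt S x = (abv S E).ncard + cnt (blw S E) x := by
  have heq : {B | B ∈ S ∧ x ∈ B} = abv S E ∪ {B | B ∈ blw S E ∧ x ∈ B} := by
    ext B
    simp only [abv, blw, Set.mem_setOf_eq, Set.mem_union]
    constructor
    · rintro ⟨hB, hxB⟩
      rcases cmp_of_mem h (hS hB) hE hxB hx with h' | h'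
      · exact Or.inr ⟨⟨hB, h'⟩, hxB⟩
      · rcases eq_or_ne B E with rfl | hne
        · exact Or.inr ⟨⟨hB, le_refl _⟩, hxB⟩
        · exact Or.inl ⟨hB, lt_of_le_of_ne h' (Ne.symm hne)⟩
    · rintro (⟨hB, hlt⟩ | ⟨⟨hB, hsub⟩, hxB⟩)
      · exact ⟨hB, hlt.le hx⟩
      · exact ⟨hB, hxB⟩
  have : cnt S x = ({B | B ∈ S ∧ x ∈ B}).ncard := rfl
  rw [this, heq, Set.ncard_union_eq (Set.disjoint_left.mpr (by
      rintro B ⟨hB, hlt⟩ ⟨⟨hB', hsub⟩, _⟩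
      exact hlt.2 hsub)) (hf.subset (fun D hD => hD.1))
    (hf.subset (fun D hD => hD.1.1))]
  rfl

/-- for x ∈ E, balls of S not below E containing x are exactly those strictly above E -/
lemma cnt_out {𝓑 : Set (Set U)} (h : DirFam 𝓑) {S : Set (Set U)} (hS : S ⊆ 𝓑)
    {E : Set U} (hE : E ∈ 𝓑) {x : U} (hx : x ∈ E) :
    {B | B ∈ outE S E ∧ x ∈ B} = abv S E := by
  ext B
  simp only [outE, abv, Set.mem_setOf_eq]
  constructor
  · rintro ⟨⟨hB, hnsub⟩, hxB⟩
    rcases cmp_of_mem h (hS hB) hE hxB hx with h' | h'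
    · exact absurd h' hnsub
    · exact ⟨hB, lt_of_le_of_ne h' (fun he => hnsub (he ▸ le_refl _))⟩
  · rintro ⟨hB, hlt⟩
    exact ⟨⟨hB, fun hsub => hlt.2 hsub⟩, hlt.le hx⟩

lemma cnt_out_fix {S : Set (Set U)} {E : Set U} {x : U} (hx : x ∉ E) :
    cnt (outE S E) x = cnt S x := by
  unfold cnt outE
  congr 1
  ext B
  simp only [Set.mem_setOf_eq]
  exact ⟨fun ⟨⟨hB, _⟩, hxB⟩ => ⟨hB, hxB⟩,
    fun ⟨hB, hxB⟩ => ⟨⟨hB, fun hsub => hx (hsub hxB)⟩, hxB⟩⟩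

/-- the master swap lemma: parities of counts are preserved -/
lemma swap_valid {𝓑 : Set (Set U)} (h : DirFam 𝓑) {S : Set (Set U)} (hS : S ⊆ 𝓑)
    (hfS : S.Finite) {E : Set U} (hE : E ∈ 𝓑) (G : Set (Set U)) (hfG : G.Finite)
    (hGE : ∀ B ∈ G, B ⊆ E)
    (hGpar : ∀ x ∈ E, (Odd ((abv S E).ncard + cnt G x) ↔ Odd (cnt S x))) :
    ∀ x, Odd (cnt (outE S E ∪ G) x) ↔ Odd (cnt S x) := by
  intro x
  have hd : ∀ D, D ∈ outE S E → D ∈ G → False := fun D hD hD' => hD.2 (hGE D hD')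
  rw [cnt_union (hfS.subset (fun D hD => hD.1)) hfG hd]
  by_cases hx : x ∈ E
  · have h1 : cnt (outE S E) x = (abv S E).ncard := by
      unfold cnt; rw [cnt_out h hS hE hx]
    rw [h1]
    exact hGpar x hx
  · have h2 : cnt G x = 0 := by
      unfold cnt
      rw [Set.ncard_eq_zero (hfG.subset (fun D hD => hD.1))]
      ext B
      simp only [Set.mem_setOf_eq, Set.mem_empty_iff_false, iff_false]
      rintro ⟨hB, hxB⟩
      exact hx (hGE B hB hxB)
    rw [h2, cnt_out_fix hx]
    simp

section profile

variable {𝓑 : Set (Set U)} {S T : Set (Set U)} {F : Set U}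

/-- above-sets of out-elements don't change in the swap -/
lemma abv_out (hB : ∀ D ∈ T, D ⊆ F) {B : Set U} (hBout : ¬ B ⊆ F) :
    abv (outE S F ∪ T) B = abv S B := by
  ext D
  simp only [abv, outE, Set.mem_setOf_eq, Set.mem_union]
  constructor
  · rintro ⟨hD | hD, hlt⟩
    · exact ⟨hD.1, hlt⟩
    · exact absurd (hlt.le.trans (hB D hD)) hBout
  · rintro ⟨hD, hlt⟩
    refine ⟨Or.inl ⟨hD, fun hsub => hBout (hlt.le.trans hsub)⟩, hlt⟩

/-- above-set of an inside element, in a swapped family -/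
lemma abv_in (h : DirFam 𝓑) (hS : S ⊆ 𝓑) (hT : T ⊆ 𝓑) (hF : F ∈ 𝓑) {C : Set U} (hC : C ∈ 𝓑) (hCF : C ⊆ F) :
    abv (outE S F ∪ blw T F) C = abv S F ∪ {D | D ∈ blw T F ∧ C ⊂ D} := by
  ext D
  simp only [abv, outE, blw, Set.mem_setOf_eq, Set.mem_union]
  constructor
  · rintro ⟨⟨hD, hnsub⟩ | hD, hlt⟩
    · rcases cmp_of_sub h (hS hD) hF hC hlt.le hCF with h' | h'
      · exact absurd h' hnsub
      · exact Or.inl ⟨hD, lt_of_le_of_ne h' (fun he => hnsub (he ▸ le_refl _))⟩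
    · exact Or.inr ⟨hD, hlt⟩
  · rintro (⟨hD, hlt⟩ | ⟨hD, hlt⟩)
    · exact ⟨Or.inl ⟨hD, fun hsub => hlt.2 hsub⟩, lt_of_le_of_lt hCF hlt⟩
    · exact ⟨Or.inr hD, hlt⟩

/-- above-set of an inside element within its own family, split at F -/
lemma abv_split (h : DirFam 𝓑) (hS : S ⊆ 𝓑) (hF : F ∈ 𝓑) {C : Set U} (hC : C ∈ 𝓑) (hCF : C ⊆ F) :
    abv S C = abv S F ∪ {D | D ∈ blw S F ∧ C ⊂ D} := by
  ext D
  simp only [abv, blw, Set.mem_setOf_eq, Set.mem_union]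
  constructor
  · rintro ⟨hD, hlt⟩
    rcases cmp_of_sub h (hS hD) hF hC hlt.le hCF with h' | h'
    · exact Or.inr ⟨⟨hD, h'⟩, hlt⟩
    · rcases eq_or_ne D F with rfl | hne
      · exact Or.inr ⟨⟨hD, le_refl _⟩, hlt⟩
      · exact Or.inl ⟨hD, lt_of_le_of_ne h' (Ne.symm hne)⟩
  · rintro (⟨hD, hlt⟩ | ⟨⟨hD, hsub⟩, hlt⟩)
    · exact ⟨hD, lt_of_le_of_lt hCF hlt⟩
    · exact ⟨hD, hlt⟩

/-- the profile bookkeeping identity -/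
lemma profile_eq (h : DirFam 𝓑) (hS : S ⊆ 𝓑) (hT : T ⊆ 𝓑) (hfS : S.Finite) (hfT : T.Finite)
    (hF : F ∈ 𝓑) (Aeq : abv S F = abv T F) (n : ℕ) :
    (Lev n (outE S F ∪ blw T F)).ncard
      + ({B | B ∈ blw S F ∧ (abv S B).ncard = n}).ncard
    = (Lev n S).ncard + ({C | C ∈ blw T F ∧ (abv T C).ncard = n}).ncard := by
  set R : Set (Set U) := outE S F ∪ blw T F with hR
  have hRsub : R ⊆ 𝓑 := by
    rintro B (hB | hB)
    · exact hS hB.1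
    · exact hT hB.1
  have hfR : R.Finite := (hfS.subset (fun D hD => hD.1)).union (hfT.subset (fun D hD => hD.1))
  have hAf : (abv S F).Finite := hfS.subset (fun D hD => hD.1)
  -- depth of inside elements computed in R equals depth in T
  have hdep : ∀ C ∈ blw T F, (abv R C).ncard = (abv T C).ncard := by
    intro C hC
    rw [abv_in h hS hT hF (hT hC.1) hC.2, abv_split h hT hF (hT hC.1) hC.2, Aeq]
  have hlevR : Lev n R = {B | B ∈ outE S F ∧ (abv S B).ncard = n}
      ∪ {C | C ∈ blw T F ∧ (abv T C).ncard = n} := by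
    rw [lev_depth n R hfR (forest_of_sub h hRsub)]
    ext B
    simp only [Set.mem_setOf_eq, Set.mem_union]
    constructor
    · rintro ⟨hB | hB, hn⟩
      · left
        refine ⟨hB, ?_⟩
        have := abv_out (S := S) (fun D (hD : D ∈ blw T F) => hD.2) hB.2
        rw [← this]
        exact hn
      · right
        refine ⟨hB, ?_⟩
        rw [← hdep B hB]
        exact hn
    · rintro (⟨hB, hn⟩ | ⟨hB, hn⟩)
      · refine ⟨Or.inl hB, ?_⟩
        have := abv_out (S := S) (fun D (hD : D ∈ blw T F) => hD.2) hB.2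
        rw [show {D | D ∈ R ∧ B ⊂ D} = abv R B from rfl, this]
        exact hn
      · refine ⟨Or.inr hB, ?_⟩
        rw [show {D | D ∈ R ∧ B ⊂ D} = abv R B from rfl, hdep B hB]
        exact hn
  have hlevS : Lev n S = {B | B ∈ outE S F ∧ (abv S B).ncard = n}
      ∪ {B | B ∈ blw S F ∧ (abv S B).ncard = n} := by
    rw [lev_depth n S hfS (forest_of_sub h hS)]
    ext B
    simp only [Set.mem_setOf_eq, Set.mem_union, outE, blw]
    by_cases hBF : B ⊆ F <;> tauto
  have hdisj1 : Disjoint {B | B ∈ outE S F ∧ (abv S B).ncard = n}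
      {C | C ∈ blw T F ∧ (abv T C).ncard = n} := Set.disjoint_left.mpr (by
    rintro B ⟨hB, _⟩ ⟨hB', _⟩
    exact hB.2 hB'.2)
  have hdisj2 : Disjoint {B | B ∈ outE S F ∧ (abv S B).ncard = n}
      {B | B ∈ blw S F ∧ (abv S B).ncard = n} := Set.disjoint_left.mpr (by
    rintro B ⟨hB, _⟩ ⟨hB', _⟩
    exact hB.2 hB'.2)
  rw [hlevR, hlevS,
    Set.ncard_union_eq hdisj1 (hfS.subset (fun D hD => hD.1.1)) (hfT.subset (fun D hD => hD.1.1)),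
    Set.ncard_union_eq hdisj2 (hfS.subset (fun D hD => hD.1.1)) (hfS.subset (fun D hD => hD.1.1))]
  omega

end profile


section sw
variable {𝓑 : Set (Set U)} {S T : Set (Set U)} {E F : Set U}

lemma split_size (hfS : S.Finite) (E : Set U) :
    S.ncard = (outE S E).ncard + (blw S E).ncard := by
  have heq : S = outE S E ∪ blw S E := by
    ext B
    simp only [outE, blw, Set.mem_union, Set.mem_setOf_eq]
    by_cases hB : B ⊆ E <;> tauto
  nth_rewrite 1 [heq]
  exact Set.ncard_union_eq (Set.disjoint_left.mpr (fun {B} hB hB' => hB.2 hB'.2))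
    (hfS.subset (fun D hD => hD.1)) (hfS.subset (fun D hD => hD.1))

lemma union_size {G : Set (Set U)} (hfS : S.Finite) (hfG : G.Finite) (hGE : ∀ B ∈ G, B ⊆ E) :
    (outE S E ∪ G).ncard = (outE S E).ncard + G.ncard :=
  Set.ncard_union_eq (Set.disjoint_left.mpr (fun {B} hB hB' => hB.2 (hGE B hB')))
    (hfS.subset (fun D hD => hD.1)) hfG

lemma qo_le {α β : Type*} [PartialOrder α] [PartialOrder β] {S : Set α} {R : Set β}
    (hq : ForestQO S R) : S.ncard ≤ R.ncard := by
  rcases hq with h | ⟨h, _⟩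
  · exact h.le
  · exact h.le

variable (h : DirFam 𝓑) (hS : S ⊆ 𝓑) (hT : T ⊆ 𝓑) (hfS : S.Finite) (hfT : T.Finite)
  (hpar : ∀ x, Odd (cnt S x) ↔ Odd (cnt T x))
  (hminS : ∀ R : Set (Set U), R ⊆ 𝓑 → R.Finite →
    (∀ x, Odd (cnt R x) ↔ Odd (cnt S x)) → ForestQO S R)

include h hS hT hfS hfT hpar hminS in
lemma even_swap (hE : E ∈ 𝓑) (hpE : (abv S E).ncard % 2 = (abv T E).ncard % 2) :
    (blw S E).ncard ≤ (blw T E).ncard := by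
  have hfG : (blw T E).Finite := hfT.subset (fun D hD => hD.1)
  have hGpar : ∀ x ∈ E, (Odd ((abv S E).ncard + cnt (blw T E) x) ↔ Odd (cnt S x)) := by
    intro x hx
    have h1 := cnt_split h hT hfT hE hx
    have h2 := hpar x
    rw [Nat.odd_iff, Nat.odd_iff] at h2
    rw [Nat.odd_iff, Nat.odd_iff]
    omega
  have hval := swap_valid h hS hfS hE (blw T E) hfG (fun B hB => hB.2) hGpar
  have hq := hminS _ (by
      rintro B (hB | hB)
      · exact hS hB.1
      · exact hT hB.1)
    ((hfS.subset (fun D hD => hD.1)).union hfG) hval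
  have hsz := qo_le hq
  have h3 := union_size (E := E) (S := S) hfS hfG (fun B hB => hB.2)
  have h4 := split_size hfS E
  omega

include h hS hT hfS hfT hpar hminS in
lemma odd_swap_mem (hE : E ∈ 𝓑) (hET : E ∈ T)
    (hpE : (abv S E).ncard % 2 ≠ (abv T E).ncard % 2) :
    (blw S E).ncard + 1 ≤ (blw T E).ncard := by
  set G : Set (Set U) := blw T E \ {E} with hG
  have hfT' : (blw T E).Finite := hfT.subset (fun D hD => hD.1)
  have hfG : G.Finite := hfT'.diff
  have hGsz : G.ncard + 1 = (blw T E).ncard :=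
    Set.ncard_diff_singleton_add_one ⟨hET, le_refl _⟩ hfT'
  have hcntG : ∀ x ∈ E, cnt G x + 1 = cnt (blw T E) x := by
    intro x hx
    have heq : {B | B ∈ G ∧ x ∈ B} = {B | B ∈ blw T E ∧ x ∈ B} \ {E} := by
      ext B
      simp only [hG, Set.mem_setOf_eq, Set.mem_diff, Set.mem_singleton_iff]
      tauto
    show ({B | B ∈ G ∧ x ∈ B}).ncard + 1 = _
    rw [heq]
    exact Set.ncard_diff_singleton_add_one ⟨⟨hET, le_refl _⟩, hx⟩
      (hfT'.subset (fun D hD => hD.1))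
  have hGpar : ∀ x ∈ E, (Odd ((abv S E).ncard + cnt G x) ↔ Odd (cnt S x)) := by
    intro x hx
    have h1 := cnt_split h hT hfT hE hx
    have h2 := hpar x
    have h3 := hcntG x hx
    rw [Nat.odd_iff, Nat.odd_iff] at h2
    rw [Nat.odd_iff, Nat.odd_iff]
    omega
  have hval := swap_valid h hS hfS hE G hfG (fun B hB => hB.1.2) hGpar
  have hq := hminS _ (by
      rintro B (hB | hB)
      · exact hS hB.1
      · exact hT hB.1.1)
    ((hfS.subset (fun D hD => hD.1)).union hfG) hval
  have hsz := qo_le hq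
  have h3 := union_size (E := E) (S := S) hfS hfG (fun B hB => hB.1.2)
  have h4 := split_size hfS E
  omega

include h hS hT hfS hfT hpar hminS in
lemma odd_swap_not_mem (hE : E ∈ 𝓑) (hET : E ∉ T)
    (hpE : (abv S E).ncard % 2 ≠ (abv T E).ncard % 2) :
    (blw S E).ncard ≤ (blw T E).ncard + 1 := by
  set G : Set (Set U) := insert E (blw T E) with hG
  have hfT' : (blw T E).Finite := hfT.subset (fun D hD => hD.1)
  have hfG : G.Finite := hfT'.insert E
  have hEnm : E ∉ blw T E := fun hmem => hET hmem.1
  have hGsz : G.ncard = (blw T E).ncard + 1 := Set.ncard_insert_of_notMem hEnm hfT'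
  have hGE : ∀ B ∈ G, B ⊆ E := by
    rintro B (rfl | hB)
    · exact le_refl _
    · exact hB.2
  have hcntG : ∀ x ∈ E, cnt G x = cnt (blw T E) x + 1 := by
    intro x hx
    have heq : {B | B ∈ G ∧ x ∈ B} = insert E {B | B ∈ blw T E ∧ x ∈ B} := by
      ext B
      simp only [hG, Set.mem_setOf_eq, Set.mem_insert_iff]
      constructor
      · rintro ⟨rfl | hB, hxB⟩
        · exact Or.inl rfl
        · exact Or.inr ⟨hB, hxB⟩
      · rintro (rfl | ⟨hB, hxB⟩)
        · exact ⟨Or.inl rfl, hx⟩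
        · exact ⟨Or.inr hB, hxB⟩
    show ({B | B ∈ G ∧ x ∈ B}).ncard = _
    rw [heq, Set.ncard_insert_of_notMem (fun hmem => hET hmem.1.1)
      (hfT'.subset (fun D hD => hD.1))]
    rfl
  have hGpar : ∀ x ∈ E, (Odd ((abv S E).ncard + cnt G x) ↔ Odd (cnt S x)) := by
    intro x hx
    have h1 := cnt_split h hT hfT hE hx
    have h2 := hpar x
    have h3 := hcntG x hx
    rw [Nat.odd_iff, Nat.odd_iff] at h2
    rw [Nat.odd_iff, Nat.odd_iff]
    omega
  have hval := swap_valid h hS hfS hE G hfG hGE hGpar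
  have hq := hminS _ (by
      rintro B (hB | hB)
      · exact hS hB.1
      · rcases hB with rfl | hB'
        · exact hE
        · exact hT hB'.1)
    ((hfS.subset (fun D hD => hD.1)).union hfG) hval
  have hsz := qo_le hq
  have h3 := union_size (E := E) (S := S) hfS hfG hGE
  have h4 := split_size hfS E
  omega

include h hS hT hfS hfT hpar hminS in
lemma profile_cmp (hF : F ∈ 𝓑) (Aeq : abv S F = abv T F)
    (hab : (blw S F).ncard = (blw T F).ncard) :
    (∀ n, pf S F n = pf T F n) ∨
      ∃ n, (∀ i < n, pf S F i = pf T F i) ∧ pf T F n < pf S F n := by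
  have hfG : (blw T F).Finite := hfT.subset (fun D hD => hD.1)
  have hGpar : ∀ x ∈ F, (Odd ((abv S F).ncard + cnt (blw T F) x) ↔ Odd (cnt S x)) := by
    intro x hx
    have h1 := cnt_split h hT hfT hF hx
    have h2 := hpar x
    have h3 : (abv S F).ncard = (abv T F).ncard := by rw [Aeq]
    rw [Nat.odd_iff, Nat.odd_iff] at h2
    rw [Nat.odd_iff, Nat.odd_iff]
    omega
  have hval := swap_valid h hS hfS hF (blw T F) hfG (fun B hB => hB.2) hGpar
  have hq := hminS _ (by
      rintro B (hB | hB)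
      · exact hS hB.1
      · exact hT hB.1)
    ((hfS.subset (fun D hD => hD.1)).union hfG) hval
  have h3 := union_size (E := F) (S := S) hfS hfG (fun B hB => hB.2)
  have h4 := split_size hfS F
  have hpe := profile_eq h hS hT hfS hfT hF Aeq
  rcases hq with hlt | ⟨_, hall | ⟨n, hbef, hlt⟩⟩
  · omega
  · left
    intro n
    have := hpe n
    have := hall n
    unfold pf
    omega
  · right
    refine ⟨n, fun i hi => ?_, ?_⟩
    · have := hpe i
      have := hbef i hi
      unfold pf
      omega
    · have := hpe n
      unfold pf
      omega

end sw

lemma firstdiff {f g : ℕ → ℕ}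
    (h1 : (∀ n, f n = g n) ∨ ∃ n, (∀ i < n, f i = g i) ∧ g n < f n)
    (h2 : (∀ n, g n = f n) ∨ ∃ n, (∀ i < n, g i = f i) ∧ f n < g n) : ∀ n, f n = g n := by
  rcases h1 with h1 | ⟨n, hn, hltn⟩
  · exact h1
  rcases h2 with h2 | ⟨m, hm, hltm⟩
  · exact absurd (h2 n).symm (by omega)
  rcases lt_trichotomy n m with hc | rfl | hc
  · exact absurd (hm n hc) (by omega)
  · omega
  · exact absurd (hn m hc) (by omega)


lemma core {𝓑 : Set (Set U)} (h : DirFam 𝓑) {S T : Set (Set U)} (hS : S ⊆ 𝓑) (hT : T ⊆ 𝓑)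
    (hfS : S.Finite) (hfT : T.Finite)
    (hpar : ∀ x, Odd (cnt S x) ↔ Odd (cnt T x))
    (hminS : ∀ R : Set (Set U), R ⊆ 𝓑 → R.Finite →
      (∀ x, Odd (cnt R x) ↔ Odd (cnt S x)) → ForestQO S R)
    (hminT : ∀ R : Set (Set U), R ⊆ 𝓑 → R.Finite →
      (∀ x, Odd (cnt R x) ↔ Odd (cnt T x)) → ForestQO T R)
    {F : Set U} (hFS : F ∈ S) (hFT : F ∉ T)
    (hFmax : ∀ D, D ∈ S ∪ T → F ⊂ D → (D ∈ S ↔ D ∈ T)) : False := by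
  have hparT : ∀ x, Odd (cnt T x) ↔ Odd (cnt S x) := fun x => (hpar x).symm
  have hF : F ∈ 𝓑 := hS hFS
  have Aeq : abv S F = abv T F := by
    ext D
    simp only [abv, Set.mem_setOf_eq]
    constructor
    · rintro ⟨hD, hlt⟩
      exact ⟨(hFmax D (Or.inl hD) hlt).mp hD, hlt⟩
    · rintro ⟨hD, hlt⟩
      exact ⟨(hFmax D (Or.inr hD) hlt).mpr hD, hlt⟩
  have hdd : (abv S F).ncard = (abv T F).ncard := by rw [Aeq]
  have hab1 := even_swap h hS hT hfS hfT hpar hminS hF (by omega)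
  have hab2 := even_swap h hT hS hfT hfS hparT hminT hF (by omega)
  have hab : (blw S F).ncard = (blw T F).ncard := le_antisymm hab1 hab2
  have hp1 := profile_cmp h hS hT hfS hfT hpar hminS hF Aeq hab
  have hp2 := profile_cmp h hT hS hfT hfS hparT hminT hF Aeq.symm hab.symm
  have hpeq : ∀ n, pf S F n = pf T F n := firstdiff hp1 hp2
  -- only F itself sits at depth d below F in S
  have hpS : {B | B ∈ blw S F ∧ (abv S B).ncard = (abv S F).ncard} = {F} := by
    ext B
    simp only [Set.mem_setOf_eq, Set.mem_singleton_iff, blw]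
    constructor
    · rintro ⟨⟨hBS, hBF⟩, hcard⟩
      by_contra hne
      have hlt : B ⊂ F := lt_of_le_of_ne hBF hne
      have hsub : insert F (abv S F) ⊆ abv S B := by
        rintro D (rfl | ⟨hD, hDlt⟩)
        · exact ⟨hFS, hlt⟩
        · exact ⟨hD, hlt.trans hDlt⟩
      have h1 : (insert F (abv S F)).ncard = (abv S F).ncard + 1 :=
        Set.ncard_insert_of_notMem (fun hmem => hmem.2.ne rfl)
          (hfS.subset fun D hD => hD.1)
      have h2 := Set.ncard_le_ncard hsub (hfS.subset fun D hD => hD.1)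
      omega
    · rintro rfl
      exact ⟨⟨hFS, le_refl _⟩, rfl⟩
  have hpSd : pf S F ((abv S F).ncard) = 1 := by
    unfold pf
    rw [hpS, Set.ncard_singleton]
  have hpTd : pf T F ((abv S F).ncard) = 1 := by rw [← hpeq]; exact hpSd
  obtain ⟨Cs, hCs⟩ := Set.ncard_eq_one.mp hpTd
  have hCsmem : Cs ∈ {C | C ∈ blw T F ∧ (abv T C).ncard = (abv S F).ncard} := by
    rw [show {C | C ∈ blw T F ∧ (abv T C).ncard = (abv S F).ncard} = {Cs} from hCs]
    rfl
  obtain ⟨⟨hCsT, hCsF⟩, hCsd⟩ := hCsmem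
  have hCsne : Cs ≠ F := fun he => hFT (he ▸ hCsT)
  have hCslt : Cs ⊂ F := lt_of_le_of_ne hCsF hCsne
  have hCsB : Cs ∈ 𝓑 := hT hCsT
  -- every member of T below F is below Cs
  have hsubCs : ∀ C ∈ blw T F, C ⊆ Cs := by
    rintro C ⟨hCT, hCF⟩
    have hWf : ({D | D ∈ T ∧ C ⊆ D ∧ D ⊆ F} : Set (Set U)).Finite :=
      hfT.subset fun D hD => hD.1
    have hWne : ({D | D ∈ T ∧ C ⊆ D ∧ D ⊆ F} : Set (Set U)).Nonempty :=
      ⟨C, hCT, le_refl _, hCF⟩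
    have hWch : IsChain (· ⊆ ·) {D | D ∈ T ∧ C ⊆ D ∧ D ⊆ F} := by
      intro D₁ hD₁ D₂ hD₂ hne
      rcases cmp_of_sub h (hT hD₁.1) (hT hD₂.1) (hT hCT) hD₁.2.1 hD₂.2.1 with h' | h'
      · exact Or.inl h'
      · exact Or.inr h'
    obtain ⟨M, hM, hmax⟩ := hWf.exists_maximal_wrt id _ hWne
    have hMtop : ∀ D ∈ ({D | D ∈ T ∧ C ⊆ D ∧ D ⊆ F} : Set (Set U)), D ⊆ M := by
      intro D hD
      rcases hWch.total hM hD with h' | h'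
      · exact (hmax D hD h').ge
      · exact h'
    have hMabv : abv T M = abv T F := by
      ext D
      simp only [abv, Set.mem_setOf_eq]
      constructor
      · rintro ⟨hD, hlt⟩
        rcases cmp_of_sub h (hT hD) hF (hT hM.1) hlt.le hM.2.2 with h' | h'
        · exfalso
          exact hlt.2 (hMtop D ⟨hD, hM.2.1.trans hlt.le, h'⟩)
        · rcases eq_or_ne D F with rfl | hne
          · exact absurd hD hFT
          · exact ⟨hD, lt_of_le_of_ne h' (Ne.symm hne)⟩
      · rintro ⟨hD, hlt⟩
        exact ⟨hD, lt_of_le_of_lt hM.2.2 hlt⟩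
    have hMmem : M ∈ {C | C ∈ blw T F ∧ (abv T C).ncard = (abv S F).ncard} := by
      refine ⟨⟨hM.1, hM.2.2⟩, ?_⟩
      rw [hMabv, ← hdd]
    rw [hCs, Set.mem_singleton_iff] at hMmem
    exact hMmem ▸ hM.2.1
  -- the count above Cs in S
  have hm : (abv S Cs).ncard
      = (abv S F).ncard + 1 + ({D | D ∈ S ∧ Cs ⊂ D ∧ D ⊂ F}).ncard := by
    have heq : abv S Cs = insert F (abv S F ∪ {D | D ∈ S ∧ Cs ⊂ D ∧ D ⊂ F}) := by
      ext D
      simp only [abv, Set.mem_setOf_eq, Set.mem_insert_iff, Set.mem_union]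
      constructor
      · rintro ⟨hD, hlt⟩
        rcases eq_or_ne D F with rfl | hne
        · exact Or.inl rfl
        · rcases cmp_of_sub h (hS hD) hF hCsB hlt.le hCsF with h' | h'
          · exact Or.inr (Or.inr ⟨hD, hlt, lt_of_le_of_ne h' hne⟩)
          · exact Or.inr (Or.inl ⟨hD, lt_of_le_of_ne h' (Ne.symm hne)⟩)
      · rintro (rfl | ⟨hD, hlt⟩ | ⟨hD, hlt, _⟩)
        · exact ⟨hFS, hCslt⟩
        · exact ⟨hD, hCslt.trans hlt⟩
        · exact ⟨hD, hlt⟩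
    have hd1 : Disjoint (abv S F) {D | D ∈ S ∧ Cs ⊂ D ∧ D ⊂ F} :=
      Set.disjoint_left.mpr (by
        rintro D ⟨hD, hlt⟩ ⟨hD', _, hlt'⟩
        exact lt_asymm hlt hlt')
    have hFnm : F ∉ abv S F ∪ {D | D ∈ S ∧ Cs ⊂ D ∧ D ⊂ F} := by
      rintro (⟨_, hlt⟩ | ⟨_, _, hlt⟩)
      · exact lt_irrefl F hlt
      · exact lt_irrefl F hlt
    have hfu : (abv S F ∪ {D | D ∈ S ∧ Cs ⊂ D ∧ D ⊂ F}).Finite :=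
      (hfS.subset fun D hD => hD.1).union (hfS.subset fun D hD => hD.1)
    rw [heq, Set.ncard_insert_of_notMem hFnm hfu,
      Set.ncard_union_eq hd1 (hfS.subset fun D hD => hD.1) (hfS.subset fun D hD => hD.1)]
    omega
  have hblwT : blw T Cs = blw T F := by
    ext C
    constructor
    · rintro ⟨hCT, hsub⟩
      exact ⟨hCT, hsub.trans hCsF⟩
    · intro hC
      exact ⟨hC.1, hsubCs C hC⟩
  have hbCs : (blw T Cs).ncard = (blw T F).ncard := by rw [hblwT]
  have hsubS : blw S Cs ⊆ blw S F \ {F} := by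
    rintro B ⟨hBS, hsub⟩
    refine ⟨⟨hBS, hsub.trans hCsF⟩, fun hBF => ?_⟩
    rw [Set.mem_singleton_iff] at hBF
    subst hBF
    exact hCslt.2 hsub
  have hdiffcard : (blw S F \ {F}).ncard + 1 = (blw S F).ncard :=
    Set.ncard_diff_singleton_add_one ⟨hFS, le_refl _⟩ (hfS.subset fun D hD => hD.1)
  have haCs_le : (blw S Cs).ncard ≤ (blw S F \ {F}).ncard :=
    Set.ncard_le_ncard hsubS ((hfS.subset fun D hD => hD.1).diff)
  by_cases hmp : (abv S Cs).ncard % 2 = (abv T Cs).ncard % 2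
  · have h1 := even_swap h hS hT hfS hfT hpar hminS hCsB hmp
    have h2 := even_swap h hT hS hfT hfS hparT hminT hCsB (by omega)
    omega
  · by_cases hCsS : Cs ∈ S
    · have h1 := odd_swap_mem h hS hT hfS hfT hpar hminS hCsB hCsT hmp
      have h2 := odd_swap_mem h hT hS hfT hfS hparT hminT hCsB hCsS (by omega)
      omega
    · have h1 := odd_swap_mem h hS hT hfS hfT hpar hminS hCsB hCsT hmp
      have h2 := odd_swap_not_mem h hT hS hfT hfS hparT hminT hCsB hCsS (by omega)
      have hseq : blw S Cs = blw S F \ {F} :=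
        Set.eq_of_subset_of_ncard_le hsubS (by omega)
          ((hfS.subset fun D hD => hD.1).diff)
      obtain ⟨x, hxF, hxCs⟩ := Set.exists_of_ssubset hCslt
      have hcntS : cnt S x = (abv S F).ncard + 1 := by
        rw [cnt_split h hS hfS hF hxF]
        have hone : {B | B ∈ blw S F ∧ x ∈ B} = {F} := by
          ext B
          simp only [Set.mem_setOf_eq, Set.mem_singleton_iff]
          constructor
          · rintro ⟨hB, hxB⟩
            by_contra hne
            have hBmem : B ∈ blw S F \ {F} := ⟨hB, hne⟩
            rw [← hseq] at hBmem
            exact hxCs (hBmem.2 hxB)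
          · rintro rfl
            exact ⟨⟨hFS, le_refl _⟩, hxF⟩
        have : cnt (blw S F) x = 1 := by
          show ({B | B ∈ blw S F ∧ x ∈ B}).ncard = 1
          rw [hone, Set.ncard_singleton]
        omega
      have hcntT : cnt T x = (abv S F).ncard := by
        rw [cnt_split h hT hfT hF hxF]
        have hz : {B | B ∈ blw T F ∧ x ∈ B} = ∅ := by
          ext B
          simp only [Set.mem_setOf_eq, Set.mem_empty_iff_false, iff_false]
          rintro ⟨hB, hxB⟩
          exact hxCs (hsubCs B hB hxB)
        have : cnt (blw T F) x = 0 := by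
          show ({B | B ∈ blw T F ∧ x ∈ B}).ncard = 0
          rw [hz, Set.ncard_empty]
        omega
      have hparx := hpar x
      rw [hcntS, hcntT, Nat.odd_iff, Nat.odd_iff] at hparx
      omega

/-- ⊴-minimal representatives of a constructible set coincide. -/
theorem stmt14 (𝓑 : Set (Set U)) (h : DirFam 𝓑) (hU : (Set.univ : Set U) ∈ 𝓑)
    (X : Set U) (hX : Constr 𝓑 X) (𝓢 𝓣 : Set (Set U))
    (h𝓢 : 𝓢 ⊆ 𝓑) (h𝓣 : 𝓣 ⊆ 𝓑) (hfS : 𝓢.Finite) (hfT : 𝓣.Finite)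
    (hS : Ch 𝓢 = X) (hT : Ch 𝓣 = X)
    (hminS : ∀ 𝓡 : Set (Set U), 𝓡 ⊆ 𝓑 → 𝓡.Finite → Ch 𝓡 = X → ForestQO 𝓢 𝓡)
    (hminT : ∀ 𝓡 : Set (Set U), 𝓡 ⊆ 𝓑 → 𝓡.Finite → Ch 𝓡 = X → ForestQO 𝓣 𝓡) :
    𝓢 = 𝓣 := by
  classical
  have hminS' : ∀ R : Set (Set U), R ⊆ 𝓑 → R.Finite →
      (∀ x, Odd (cnt R x) ↔ Odd (cnt 𝓢 x)) → ForestQO 𝓢 R := by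
    intro R hR hfR hp
    apply hminS R hR hfR
    rw [← hS]
    ext x
    rw [mem_Ch_iff_odd h hR hfR x, mem_Ch_iff_odd h h𝓢 hfS x]
    exact hp x
  have hminT' : ∀ R : Set (Set U), R ⊆ 𝓑 → R.Finite →
      (∀ x, Odd (cnt R x) ↔ Odd (cnt 𝓣 x)) → ForestQO 𝓣 R := by
    intro R hR hfR hp
    apply hminT R hR hfR
    rw [← hT]
    ext x
    rw [mem_Ch_iff_odd h hR hfR x, mem_Ch_iff_odd h h𝓣 hfT x]
    exact hp x
  have hpar : ∀ x, Odd (cnt 𝓢 x) ↔ Odd (cnt 𝓣 x) := by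
    intro x
    rw [← mem_Ch_iff_odd h h𝓢 hfS x, ← mem_Ch_iff_odd h h𝓣 hfT x, hS, hT]
  by_contra hne
  have hDne : ((𝓢 \ 𝓣) ∪ (𝓣 \ 𝓢)).Nonempty := by
    rw [Set.nonempty_iff_ne_empty]
    intro hemp
    rw [Set.union_empty_iff] at hemp
    exact hne (le_antisymm (Set.diff_eq_empty.mp hemp.1) (Set.diff_eq_empty.mp hemp.2))
  have hDf : ((𝓢 \ 𝓣) ∪ (𝓣 \ 𝓢)).Finite := (hfS.diff).union (hfT.diff)
  obtain ⟨F, hFD, hmax⟩ := hDf.exists_maximal_wrt id _ hDne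
  have hFmax : ∀ D, D ∈ 𝓢 ∪ 𝓣 → F ⊂ D → (D ∈ 𝓢 ↔ D ∈ 𝓣) := by
    intro D hD hlt
    constructor
    · intro hDS
      by_contra hDT
      exact hlt.ne (hmax D (Or.inl ⟨hDS, hDT⟩) hlt.le)
    · intro hDT
      by_contra hDS
      exact hlt.ne (hmax D (Or.inr ⟨hDT, hDS⟩) hlt.le)
  rcases hFD with ⟨hFS', hFT'⟩ | ⟨hFT', hFS'⟩
  · exact core h h𝓢 h𝓣 hfS hfT hpar hminS' hminT' hFS' hFT' hFmax
  · refine core h h𝓣 h𝓢 hfT hfS (fun x => (hpar x).symm) hminT' hminS' hFT' hFS' ?_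
    intro D hD hlt
    have hD' : D ∈ 𝓢 ∪ 𝓣 := by
      rcases hD with hD | hD
      · exact Or.inr hD
      · exact Or.inl hD
    exact (hFmax D hD' hlt).symm
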